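/- Under the Heisenberg inversion I, the Cygan distance transforms by ρ_c(I(p), I(q)) = ρ_c(p,q) / ( ||p||_c · ||q||_c ) for all p, q ∈ H_n \ {0}. -/

import Mathlib

noncomputable def Hmul {m : ℕ} (p q : EuclideanSpace ℂ (Fin m) × ℝ) :
    EuclideanSpace ℂ (Fin m) × ℝ :=
  (p.1 + q.1, p.2 + q.2 + 2 * (inner ℂ q.1 p.1 : ℂ).im)

def Hinv {m : ℕ} (p : EuclideanSpace ℂ (Fin m) × ℝ) : EuclideanSpace ℂ (Fin m) × ℝ :=
  (-p.1, -p.2)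

noncomputable def cygan {m : ℕ} (p : EuclideanSpace ℂ (Fin m) × ℝ) : ℝ :=
  Real.sqrt ‖(((‖p.1‖ ^ 2 : ℝ) : ℂ) - p.2 * Complex.I)‖

noncomputable def cyganDist {m : ℕ} (p q : EuclideanSpace ℂ (Fin m) × ℝ) : ℝ :=
  cygan (Hmul (Hinv p) q)

noncomputable def heisInversion {m : ℕ} (p : EuclideanSpace ℂ (Fin m) × ℝ) :
    EuclideanSpace ℂ (Fin m) × ℝ :=
  (((((‖p.1‖ ^ 2 : ℝ) : ℂ) - p.2 * Complex.I)⁻¹) • p.1,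
    -p.2 / (p.2 ^ 2 + ‖p.1‖ ^ 4))

noncomputable def nuC {m : ℕ} (p : EuclideanSpace ℂ (Fin m) × ℝ) : ℂ :=
  ((‖p.1‖ ^ 2 : ℝ) : ℂ) - p.2 * Complex.I

lemma cygan_eq_nu {m : ℕ} (p : EuclideanSpace ℂ (Fin m) × ℝ) :
    cygan p = Real.sqrt ‖nuC p‖ := rfl

lemma nuC_re {m : ℕ} (p : EuclideanSpace ℂ (Fin m) × ℝ) : (nuC p).re = ‖p.1‖ ^ 2 := by
  simp [nuC, ← Complex.ofReal_pow]

lemma nuC_im {m : ℕ} (p : EuclideanSpace ℂ (Fin m) × ℝ) : (nuC p).im = -p.2 := by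
  simp [nuC, ← Complex.ofReal_pow]

lemma nuC_ne_zero {m : ℕ} (p : EuclideanSpace ℂ (Fin m) × ℝ) (hp : p ≠ (0, 0)) :
    nuC p ≠ 0 := by
  intro h
  apply hp
  have h1 := congrArg Complex.re h
  have h2 := congrArg Complex.im h
  rw [nuC_re] at h1
  rw [nuC_im] at h2
  simp at h1 h2
  ext <;> simp [h1, h2]

lemma normSq_nuC {m : ℕ} (p : EuclideanSpace ℂ (Fin m) × ℝ) :
    Complex.normSq (nuC p) = p.2 ^ 2 + ‖p.1‖ ^ 4 := by
  rw [Complex.normSq_apply, nuC_re, nuC_im]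
  ring

lemma nu_Hmul {m : ℕ} (p q : EuclideanSpace ℂ (Fin m) × ℝ) :
    nuC (Hmul (Hinv p) q)
      = (starRingEnd ℂ) (nuC p) + nuC q - 2 * (inner ℂ p.1 q.1 : ℂ) := by
  have hz : (inner ℂ q.1 p.1 : ℂ) = (starRingEnd ℂ) (inner ℂ p.1 q.1 : ℂ) :=
    (inner_conj_symm q.1 p.1).symm
  have hnorm : ‖(-p.1 + q.1 : EuclideanSpace ℂ (Fin m))‖ ^ 2
      = ‖q.1‖ ^ 2 - 2 * (inner ℂ p.1 q.1 : ℂ).re + ‖p.1‖ ^ 2 := by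
    rw [neg_add_eq_sub, norm_sub_sq (𝕜 := ℂ) q.1 p.1, hz]
    simp
    rw [hz, Complex.conj_re]
  unfold nuC Hmul Hinv
  simp only [inner_neg_right, Complex.neg_im, hz, hnorm]
  generalize (inner ℂ p.1 q.1 : ℂ) = z
  apply Complex.ext <;>
    simp [Complex.conj_re, Complex.conj_im, ← Complex.ofReal_pow] <;> ring

lemma nu_inversion {m : ℕ} (p : EuclideanSpace ℂ (Fin m) × ℝ) (hp : nuC p ≠ 0) :
    nuC (heisInversion p) = (nuC p)⁻¹ := by
  have hns : Complex.normSq (nuC p) ≠ 0 := by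
    simpa using Complex.normSq_pos.mpr hp |>.ne'
  have hnorm : ‖((nuC p)⁻¹ • p.1 : EuclideanSpace ℂ (Fin m))‖ ^ 2
      = ‖p.1‖ ^ 2 / Complex.normSq (nuC p) := by
    rw [norm_smul, mul_pow, norm_inv, inv_pow, Complex.sq_norm]
    ring
  apply Complex.ext
  · rw [nuC_re, Complex.inv_re, nuC_re]
    exact hnorm
  · rw [nuC_im, Complex.inv_im, nuC_im, normSq_nuC]
    show -((-p.2) / (p.2 ^ 2 + ‖p.1‖ ^ 4)) = _
    ring

/-- under the Heisenberg inversion `I`, the Cygan distance transforms by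
`ρ_c(I(p), I(q)) = ρ_c(p,q) / (||p||_c · ||q||_c)` for all `p, q ∈ H_n \ {0}`. -/
theorem heisInversion_cyganDist (n : ℕ) (hn : 2 ≤ n)
    (p q : EuclideanSpace ℂ (Fin (n-1)) × ℝ) (hp : p ≠ (0, 0)) (hq : q ≠ (0, 0)) :
    cyganDist (heisInversion p) (heisInversion q) = cyganDist p q / (cygan p * cygan q) := by
  have hp' : nuC p ≠ 0 := nuC_ne_zero p hp
  have hq' : nuC q ≠ 0 := nuC_ne_zero q hq
  have hpc : (starRingEnd ℂ) (nuC p) ≠ 0 := by simpa using hp'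
  have hinner : (inner ℂ (heisInversion p).1 (heisInversion q).1 : ℂ)
      = (starRingEnd ℂ) ((nuC p)⁻¹) * ((nuC q)⁻¹ * (inner ℂ p.1 q.1 : ℂ)) := by
    show (inner ℂ ((nuC p)⁻¹ • p.1) ((nuC q)⁻¹ • q.1) : ℂ) = _
    rw [inner_smul_left, inner_smul_right]
  have key : nuC (Hmul (Hinv (heisInversion p)) (heisInversion q))
      = nuC (Hmul (Hinv p) q) / ((starRingEnd ℂ) (nuC p) * nuC q) := by
    rw [nu_Hmul, nu_Hmul, nu_inversion p hp', nu_inversion q hq', hinner, map_inv₀]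
    field_simp
    ring
  show cygan _ = cygan (Hmul (Hinv p) q) / (cygan p * cygan q)
  rw [cygan_eq_nu, cygan_eq_nu, cygan_eq_nu, cygan_eq_nu, key, norm_div, norm_mul,
    Complex.norm_conj]
  rw [Real.sqrt_div (norm_nonneg _), Real.sqrt_mul (norm_nonneg _)]
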